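/- For any probability distribution P = (p₁,…,pₙ) with all pᵢ > 0, there exists a binary alphabetic code with codeword lengths ℓ₁ = ⌈−log₂ p₁⌉, ℓₙ = ⌈−log₂ pₙ⌉, and ℓᵢ = ⌈−log₂ pᵢ⌉ + 1 for 2 ≤ i ≤ n−1, and consequently its average length satisfies ∑ᵢ pᵢ·ℓᵢ ≤ H(P) + 2 − p₁ − pₙ. -/
import Mathlib


/-- No codeword is a prefix of another. -/
def PrefixFree {n : ℕ} (w : Fin n → List Bool) : Prop :=
  ∀ i j : Fin n, i ≠ j → ¬ (w i <+: w j)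

/-- The codewords are strictly increasing in the lexicographic order on binary strings. -/
def LexIncreasing {n : ℕ} (w : Fin n → List Bool) : Prop :=
  ∀ i j : Fin n, i < j → List.Lex (· < ·) (w i) (w j)

/-- A binary alphabetic code: prefix-free and lexicographically increasing codewords. -/
def IsAlphabeticCode {n : ℕ} (w : Fin n → List Bool) : Prop :=
  PrefixFree w ∧ LexIncreasing w


/-- Yeung's bound: there is an alphabetic code with lengths ⌈−log₂ pᵢ⌉ at the two
extremes and ⌈−log₂ pᵢ⌉ + 1 in between, whose average length is at most
H(P) + 2 − p₁ − pₙ. -/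
def codeword : ℕ → ℕ → List Bool
  | 0, _ => []
  | (m+1), c => (decide (2^m ≤ c)) :: codeword m (c % 2^m)


lemma codeword_length (ℓ c : ℕ) : (codeword ℓ c).length = ℓ := by
  induction ℓ generalizing c with
  | zero => rfl
  | succ m ih => simp [codeword, ih]

lemma codeword_sep : ∀ (ℓ₁ ℓ₂ c₁ c₂ : ℕ), c₁ < 2^ℓ₁ → c₂ < 2^ℓ₂ →
    (c₁+1) * 2^ℓ₂ ≤ c₂ * 2^ℓ₁ →
    List.Lex (· < ·) (codeword ℓ₁ c₁) (codeword ℓ₂ c₂) ∧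
    ¬ (codeword ℓ₁ c₁ <+: codeword ℓ₂ c₂) ∧ ¬ (codeword ℓ₂ c₂ <+: codeword ℓ₁ c₁) := by
  intro ℓ₁
  induction ℓ₁ with
  | zero =>
    intro ℓ₂ c₁ c₂ h1 h2 h
    simp only [pow_zero, mul_one] at h
    have : 2^ℓ₂ ≤ (c₁+1) * 2^ℓ₂ := Nat.le_mul_of_pos_left _ (by omega)
    omega
  | succ m ih =>
    intro ℓ₂ c₁ c₂ h1 h2 h
    match ℓ₂ with
    | 0 =>
      simp only [pow_zero] at h2
      interval_cases c₂
      simp at h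
    | (k+1) =>
      by_cases hb1 : 2^m ≤ c₁ <;> by_cases hb2 : 2^k ≤ c₂
      · -- both true
        obtain ⟨a, rfl⟩ : ∃ a, c₁ = 2^m + a := ⟨c₁ - 2^m, by omega⟩
        obtain ⟨b, rfl⟩ : ∃ b, c₂ = 2^k + b := ⟨c₂ - 2^k, by omega⟩
        have ha : a < 2^m := by
          have : 2^(m+1) = 2^m + 2^m := by ring
          omega
        have hbb : b < 2^k := by
          have : 2^(k+1) = 2^k + 2^k := by ring
          omega
        have hmod1 : (2^m + a) % 2^m = a := by
          rw [Nat.add_mod_left, Nat.mod_eq_of_lt ha]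
        have hmod2 : (2^k + b) % 2^k = b := by
          rw [Nat.add_mod_left, Nat.mod_eq_of_lt hbb]
        have hkey : (a+1) * 2^k ≤ b * 2^m := by
          have hh : (2^m + a + 1) * (2 * 2^k) ≤ (2^k + b) * (2 * 2^m) := by
            calc (2^m + a + 1) * (2 * 2^k) = (2^m+a+1) * 2^(k+1) := by ring
            _ ≤ (2^k+b) * 2^(m+1) := h
            _ = (2^k + b) * (2*2^m) := by ring
          nlinarith
        obtain ⟨hl, hp1, hp2⟩ := ih k a b ha hbb hkey
        simp only [codeword, hmod1, hmod2, decide_eq_true (by omega : 2^m ≤ 2^m + a),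
          decide_eq_true (by omega : 2^k ≤ 2^k + b)]
        refine ⟨List.Lex.cons hl, ?_, ?_⟩
        · rw [List.cons_prefix_cons]; rintro ⟨-, h⟩; exact hp1 h
        · rw [List.cons_prefix_cons]; rintro ⟨-, h⟩; exact hp2 h
      · -- b1 true, b2 false: contradiction
        exfalso
        have h1' : 2^(m+1) * 2^k < (c₁+1) * 2^(k+1) := by
          have e1 : (c₁+1) * 2^(k+1) = ((c₁+1)*2) * 2^k := by ring
          have e2 : 2^(m+1) * 2^k = (2^m*2) * 2^k := by ring
          rw [e1, e2]
          exact (Nat.mul_lt_mul_right (pow_pos two_pos k)).mpr (by omega)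
        have h2' : c₂ * 2^(m+1) < 2^(m+1) * 2^k := by
          have e1 : c₂ * 2^(m+1) = c₂ * 2^(m+1) := rfl
          have e2 : 2^(m+1) * 2^k = 2^k * 2^(m+1) := by ring
          rw [e2]
          exact (Nat.mul_lt_mul_right (pow_pos two_pos (m+1))).mpr (by omega)
        omega
      · -- b1 false, b2 true: heads false, true
        simp only [codeword, decide_eq_false (by omega : ¬ 2^m ≤ c₁),
          decide_eq_true hb2]
        refine ⟨List.Lex.rel (by decide), ?_, ?_⟩
        · rw [List.cons_prefix_cons]; rintro ⟨h, -⟩; simp at h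
        · rw [List.cons_prefix_cons]; rintro ⟨h, -⟩; simp at h
      · -- both false
        have hmod1 : c₁ % 2^m = c₁ := Nat.mod_eq_of_lt (by omega)
        have hmod2 : c₂ % 2^k = c₂ := Nat.mod_eq_of_lt (by omega)
        have hkey : (c₁+1) * 2^k ≤ c₂ * 2^m := by
          have hh : (c₁ + 1) * (2 * 2^k) ≤ c₂ * (2 * 2^m) := by
            calc (c₁ + 1) * (2 * 2^k) = (c₁+1) * 2^(k+1) := by ring
            _ ≤ c₂ * 2^(m+1) := h
            _ = c₂ * (2*2^m) := by ring
          nlinarith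
        obtain ⟨hl, hp1, hp2⟩ := ih k c₁ c₂ (by omega) (by omega) hkey
        simp only [codeword, hmod1, hmod2, decide_eq_false (by omega : ¬ 2^m ≤ c₁),
          decide_eq_false hb2]
        refine ⟨List.Lex.cons hl, ?_, ?_⟩
        · rw [List.cons_prefix_cons]; rintro ⟨-, h⟩; exact hp1 h
        · rw [List.cons_prefix_cons]; rintro ⟨-, h⟩; exact hp2 h

theorem yeung_bound (n : ℕ) (hn : 0 < n) (p : Fin n → ℝ) (hp : ∀ i, 0 < p i)
    (hsum : ∑ i, p i = 1) :
    ∃ w : Fin n → List Bool, IsAlphabeticCode w ∧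
      (∀ i : Fin n, (w i).length =
        if i.1 = 0 ∨ i.1 = n - 1 then (⌈-Real.logb 2 (p i)⌉).toNat
        else (⌈-Real.logb 2 (p i)⌉).toNat + 1) ∧
      ∑ i, p i * ((w i).length : ℝ) ≤
        (-∑ i, p i * Real.logb 2 (p i)) + 2 - p ⟨0, hn⟩ - p ⟨n - 1, by omega⟩ := by
  classical
  -- lengths
  set ℓ : Fin n → ℕ := fun i =>
    if i.1 = 0 ∨ i.1 = n - 1 then (⌈-Real.logb 2 (p i)⌉).toNat
    else (⌈-Real.logb 2 (p i)⌉).toNat + 1 with hℓdef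
  set q : ℕ → ℝ := fun k => if h : k < n then p ⟨k, h⟩ else 0 with hqdef
  set S : ℕ → ℝ := fun m => ∑ k ∈ Finset.range m, q k with hSdef
  have hq_nonneg : ∀ k, 0 ≤ q k := by
    intro k; rw [hqdef]; dsimp only; split
    · exact (hp _).le
    · rfl
  have hqi : ∀ i : Fin n, q i.1 = p i := by
    intro i; rw [hqdef]; dsimp only; rw [dif_pos i.2]
  have hS_nonneg : ∀ m, 0 ≤ S m := fun m =>
    Finset.sum_nonneg (fun k _ => hq_nonneg k)
  have hS_mono : ∀ a b, a ≤ b → S a ≤ S b := by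
    intro a b hab
    exact Finset.sum_le_sum_of_subset_of_nonneg
      (Finset.range_subset_range.mpr hab) (fun k _ _ => hq_nonneg k)
  have hSn : S n = 1 := by
    rw [hSdef]; dsimp only
    rw [← Fin.sum_univ_eq_sum_range (fun k => q k) n]
    rw [← hsum]
    exact Finset.sum_congr rfl (fun i _ => hqi i)
  have hstep : ∀ i : Fin n, S (i.1 + 1) = S i.1 + p i := by
    intro i
    rw [hSdef]; dsimp only
    rw [Finset.sum_range_succ, hqi]
  have hS_le : ∀ i : Fin n, S i.1 + p i ≤ 1 := by
    intro i
    rw [← hstep i, ← hSn]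
    exact hS_mono _ _ i.2
  have hp1 : ∀ i, p i ≤ 1 := by
    intro i
    have := hS_le i
    have := hS_nonneg i.1
    linarith
  have hlognn : ∀ i, 0 ≤ -Real.logb 2 (p i) := by
    intro i
    simp only [neg_nonneg]
    exact Real.logb_nonpos (by norm_num) (hp i).le (hp1 i)
  have hceilcast : ∀ i : Fin n, ((⌈-Real.logb 2 (p i)⌉).toNat : ℝ) = ⌈-Real.logb 2 (p i)⌉ := by
    intro i
    exact_mod_cast congrArg (Int.cast : ℤ → ℝ)
      (Int.toNat_of_nonneg (Int.ceil_nonneg (hlognn i)))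
  -- 1 ≤ p i * 2 ^ ℓ₀ i
  have hpow : ∀ i : Fin n, 1 ≤ p i * 2 ^ ((⌈-Real.logb 2 (p i)⌉).toNat : ℕ) := by
    intro i
    have h1 : -Real.logb 2 (p i) ≤ ((⌈-Real.logb 2 (p i)⌉).toNat : ℝ) := by
      rw [hceilcast i]; exact Int.le_ceil _
    have h2 : (2:ℝ) ^ (-Real.logb 2 (p i)) ≤ (2:ℝ) ^ (((⌈-Real.logb 2 (p i)⌉).toNat : ℕ) : ℝ) :=
      Real.rpow_le_rpow_of_exponent_le (by norm_num) h1
    rw [Real.rpow_natCast] at h2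
    rw [Real.rpow_neg (by norm_num), Real.rpow_logb (by norm_num) (by norm_num) (hp i)] at h2
    calc (1:ℝ) = p i * (p i)⁻¹ := (mul_inv_cancel₀ (hp i).ne').symm
    _ ≤ p i * 2 ^ ((⌈-Real.logb 2 (p i)⌉).toNat : ℕ) :=
        mul_le_mul_of_nonneg_left h2 (hp i).le
  have hpowℓ : ∀ i : Fin n, 1 ≤ p i * 2 ^ (ℓ i) := by
    intro i
    refine le_trans (hpow i) (mul_le_mul_of_nonneg_left ?_ (hp i).le)
    have : (⌈-Real.logb 2 (p i)⌉).toNat ≤ ℓ i := by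
      rw [hℓdef]; dsimp only; split <;> omega
    exact_mod_cast pow_le_pow_right₀ (by norm_num) this
  -- codeword integer values
  set c : Fin n → ℕ := fun i => (⌈S i.1 * 2 ^ (ℓ i)⌉).toNat with hcdef
  have hc_cast : ∀ i : Fin n, (c i : ℝ) = ⌈S i.1 * 2 ^ (ℓ i)⌉ := by
    intro i
    rw [hcdef]; dsimp only
    exact_mod_cast congrArg (Int.cast : ℤ → ℝ)
      (Int.toNat_of_nonneg (Int.ceil_nonneg (mul_nonneg (hS_nonneg _) (by positivity))))
  have hc_ge : ∀ i : Fin n, S i.1 * 2 ^ (ℓ i) ≤ (c i : ℝ) := by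
    intro i; rw [hc_cast i]; exact Int.le_ceil _
  have hc_lt_real : ∀ i : Fin n, (c i : ℝ) < S i.1 * 2 ^ (ℓ i) + 1 := by
    intro i; rw [hc_cast i]; exact Int.ceil_lt_add_one _
  have hc_lt : ∀ i : Fin n, c i < 2 ^ (ℓ i) := by
    intro i
    have hb : (c i : ℝ) ≤ 2 ^ (ℓ i) - 1 := by
      rw [hc_cast i]
      have : (⌈S i.1 * 2 ^ (ℓ i)⌉ : ℤ) ≤ (2 ^ (ℓ i) - 1 : ℤ) := by
        rw [Int.ceil_le]
        push_cast
        have h1 : S i.1 ≤ 1 - p i := by linarith [hS_le i]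
        have h2 : 1 ≤ p i * 2 ^ (ℓ i) := hpowℓ i
        have h3 : (0:ℝ) < 2 ^ (ℓ i) := by positivity
        nlinarith
      exact_mod_cast this
    have : (c i : ℝ) < 2 ^ (ℓ i) := by
      have h3 : (0:ℝ) < 2 ^ (ℓ i) := by positivity
      linarith
    exact_mod_cast this
  have hS0 : S 0 = 0 := Finset.sum_range_zero q
  have hc0 : ∀ i : Fin n, i.1 = 0 → c i = 0 := by
    intro i hi
    rw [hcdef]; dsimp only
    rw [hi, hS0, zero_mul, Int.ceil_zero, Int.toNat_zero]
  have hpow2 : ∀ i : Fin n, i.1 ≠ 0 → i.1 ≠ n - 1 → 2 ≤ p i * 2 ^ (ℓ i) := by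
    intro i h1 h2
    have hℓi : ℓ i = (⌈-Real.logb 2 (p i)⌉).toNat + 1 := by
      rw [hℓdef]; dsimp only; rw [if_neg (by tauto)]
    rw [hℓi, pow_succ]
    calc (2:ℝ) = 1 * 2 := (one_mul 2).symm
    _ ≤ (p i * 2 ^ ((⌈-Real.logb 2 (p i)⌉).toNat : ℕ)) * 2 := by
        have := hpow i; linarith
    _ = p i * (2 ^ ((⌈-Real.logb 2 (p i)⌉).toNat : ℕ) * 2) := by ring
  have hsep1 : ∀ i j : Fin n, i.1 + 1 = j.1 →
      ((c i : ℝ) + 1) / 2 ^ (ℓ i) ≤ (c j : ℝ) / 2 ^ (ℓ j) := by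
    intro i j hij
    have hpi : (0:ℝ) < 2 ^ (ℓ i) := by positivity
    have hpj : (0:ℝ) < 2 ^ (ℓ j) := by positivity
    have hrhs : S i.1 + p i ≤ (c j : ℝ) / 2 ^ (ℓ j) := by
      rw [le_div_iff₀ hpj]
      have := hc_ge j
      rw [← hij, hstep i] at this
      exact this
    refine le_trans ?_ hrhs
    rw [div_le_iff₀ hpi]
    by_cases h0 : i.1 = 0
    · rw [hc0 i h0]
      have hSi : S i.1 = 0 := by rw [h0, hS0]
      rw [hSi]
      have := hpowℓ i
      push_cast
      nlinarith
    · have hnl : i.1 ≠ n - 1 := by omega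
      have h2 := hpow2 i h0 hnl
      have h3 := hc_lt_real i
      nlinarith
  have hsep : ∀ d : ℕ, ∀ i j : Fin n, i.1 + 1 + d = j.1 →
      ((c i : ℝ) + 1) / 2 ^ (ℓ i) ≤ (c j : ℝ) / 2 ^ (ℓ j) := by
    intro d
    induction d with
    | zero => intro i j hij; exact hsep1 i j (by omega)
    | succ e ih =>
      intro i j hij
      have hj' : i.1 + 1 + e < n := by omega
      set j' : Fin n := ⟨i.1 + 1 + e, hj'⟩ with hj'def
      calc ((c i : ℝ) + 1) / 2 ^ (ℓ i) ≤ (c j' : ℝ) / 2 ^ (ℓ j') := ih i j' rfl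
      _ ≤ ((c j' : ℝ) + 1) / 2 ^ (ℓ j') := by gcongr; linarith
      _ ≤ (c j : ℝ) / 2 ^ (ℓ j) := hsep1 j' j (by simp [hj'def]; omega)
  have hsepN : ∀ i j : Fin n, i < j → (c i + 1) * 2 ^ (ℓ j) ≤ c j * 2 ^ (ℓ i) := by
    intro i j hij
    have hij' : i.1 + 1 + (j.1 - i.1 - 1) = j.1 := by
      have := hij; rw [Fin.lt_def] at this; omega
    have hr := hsep (j.1 - i.1 - 1) i j hij'
    have hpi : (0:ℝ) < 2 ^ (ℓ i) := by positivity
    have hpj : (0:ℝ) < 2 ^ (ℓ j) := by positivity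
    rw [div_le_div_iff₀ hpi hpj] at hr
    have : ((c i + 1) * 2 ^ (ℓ j) : ℝ) ≤ (c j * 2 ^ (ℓ i) : ℝ) := by push_cast; linarith
    exact_mod_cast this
  set w : Fin n → List Bool := fun i => codeword (ℓ i) (c i) with hwdef
  have hwlen : ∀ i : Fin n, (w i).length = ℓ i := fun i => codeword_length _ _
  have hsepfull : ∀ i j : Fin n, i < j →
      List.Lex (· < ·) (w i) (w j) ∧ ¬ (w i <+: w j) ∧ ¬ (w j <+: w i) := by
    intro i j hij
    exact codeword_sep (ℓ i) (ℓ j) (c i) (c j) (hc_lt i) (hc_lt j) (hsepN i j hij)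
  refine ⟨w, ⟨?_, ?_⟩, ?_, ?_⟩
  · intro i j hij
    rcases lt_or_gt_of_ne hij with h | h
    · exact (hsepfull i j h).2.1
    · exact (hsepfull j i h).2.2
  · intro i j hij; exact (hsepfull i j hij).1
  · intro i; exact hwlen i
  · -- average length bound
    by_cases hn2 : 2 ≤ n
    · -- n ≥ 2
      have hlen_le : ∀ i : Fin n, ((ℓ i : ℕ) : ℝ) ≤
          -Real.logb 2 (p i) + (if i.1 = 0 ∨ i.1 = n - 1 then 1 else 2) := by
        intro i
        have h1 : (((⌈-Real.logb 2 (p i)⌉).toNat : ℕ) : ℝ) ≤ -Real.logb 2 (p i) + 1 := by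
          rw [hceilcast i]
          linarith [Int.ceil_lt_add_one (-Real.logb 2 (p i))]
        rw [hℓdef]; dsimp only
        split
        · simpa using h1
        · push_cast at h1 ⊢
          linarith
      have step1 : ∑ i, p i * ((w i).length : ℝ) ≤
          ∑ i, (p i * (-Real.logb 2 (p i)) +
            (2 * p i - (if i.1 = 0 ∨ i.1 = n - 1 then p i else 0))) := by
        apply Finset.sum_le_sum
        intro i _
        rw [hwlen i]
        have hb := hlen_le i
        have hpi := (hp i).le
        rcases Classical.em (i.1 = 0 ∨ i.1 = n - 1) with hcond | hcond
        · rw [if_pos hcond] at hb ⊢; nlinarith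
        · rw [if_neg hcond] at hb ⊢; nlinarith
      have hitesum : ∑ i : Fin n, (if i.1 = 0 ∨ i.1 = n - 1 then p i else 0) =
          p ⟨0, hn⟩ + p ⟨n - 1, by omega⟩ := by
        rw [← Finset.sum_filter]
        have hfil : Finset.univ.filter (fun i : Fin n => i.1 = 0 ∨ i.1 = n - 1) =
            {⟨0, hn⟩, ⟨n - 1, by omega⟩} := by
          ext i
          simp [Finset.mem_filter, Fin.ext_iff]
        rw [hfil]
        rw [Finset.sum_pair (by simp [Fin.ext_iff]; omega)]
      have step2 : ∑ i, (p i * (-Real.logb 2 (p i)) +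
            (2 * p i - (if i.1 = 0 ∨ i.1 = n - 1 then p i else 0))) =
          (-∑ i, p i * Real.logb 2 (p i)) + 2 - p ⟨0, hn⟩ - p ⟨n - 1, by omega⟩ := by
        rw [Finset.sum_add_distrib, Finset.sum_sub_distrib, hitesum, ← Finset.mul_sum, hsum]
        have h1 : ∑ i : Fin n, p i * -Real.logb 2 (p i) =
            -∑ i : Fin n, p i * Real.logb 2 (p i) := by
          rw [← Finset.sum_neg_distrib]
          exact Finset.sum_congr rfl (fun i _ => by ring)
        rw [h1]; ring
      calc ∑ i, p i * ((w i).length : ℝ) ≤ _ := step1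
        _ = _ := step2
    · -- n = 1
      have hn1 : n = 1 := by omega
      subst hn1
      have hp0 : p 0 = 1 := by rw [← hsum, Fin.sum_univ_one]
      have hall : ∀ i : Fin 1, i = 0 := fun i => Subsingleton.elim i 0
      have hℓ0 : ℓ 0 = 0 := by
        simp [hℓdef, hp0]
      rw [Fin.sum_univ_one, Fin.sum_univ_one, hwlen 0, hℓ0]
      have he : p ⟨0, hn⟩ = p 0 := by congr
      rw [he] at *
      rw [hp0]
      norm_num
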